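/- For every n ≥ 3, the unidirectional oriented cycle C⃗_n is {0,1}-antimagic. -/
import Mathlib


open scoped Classical

/-- There is a directed walk of length `k` from `u` to `v` in the digraph with arc relation `A`. -/
def WalkLen {V : Type*} (A : V → V → Prop) : ℕ → V → V → Prop
  | 0, u, v => u = v
  | k + 1, u, v => ∃ w, A u w ∧ WalkLen A k w v

/-- The directed distance from `u` to `v` is exactly `k`
(i.e. `k` is the length of a shortest directed path from `u` to `v`). -/
def HasDist {V : Type*} (A : V → V → Prop) (u v : V) (k : ℕ) : Prop :=
  WalkLen A k u v ∧ ∀ m < k, ¬ WalkLen A m u v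

/-- `y` belongs to the `D`-neighborhood of `v`: the distance from `v` to `y` lies in `D`. -/
def InDNbhd {V : Type*} (A : V → V → Prop) (D : Set ℕ) (v y : V) : Prop :=
  ∃ k ∈ D, HasDist A v y k

/-- The `D`-weight of `v` under the labeling `f`: the sum of labels of the `D`-neighbors. -/
noncomputable def dWeight {V : Type*} [Fintype V] (A : V → V → Prop) (D : Set ℕ)
    (f : V → ℕ) (v : V) : ℕ :=
  ∑ y : V, if InDNbhd A D v y then f y else 0

/-- The digraph `(V, A)` is `D`-antimagic: some bijective labeling of the vertices by
`1, …, |V|` gives pairwise distinct `D`-weights. -/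
def DAntimagic (V : Type*) [Fintype V] (A : V → V → Prop) (D : Set ℕ) : Prop :=
  ∃ f : V ≃ Fin (Fintype.card V),
    Function.Injective fun v => dWeight A D (fun y => (f y : ℕ) + 1) v

/-- The orientation of the cycle `C_n` determined by `σ`: the edge between vertex `i` and
vertex `(i+1) mod n` is directed `i → i+1` when `σ i = true`, and `i+1 → i` otherwise. -/
def cycleArc (n : ℕ) (σ : Fin n → Bool) (u v : Fin n) : Prop :=
  (σ u = true ∧ (v : ℕ) = ((u : ℕ) + 1) % n) ∨
  (σ v = false ∧ (u : ℕ) = ((v : ℕ) + 1) % n)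

/-- The arc relation of the unidirectional oriented cycle `C⃗_n`: arcs `i → (i+1) mod n`. -/
def uniArc (n : ℕ) (u v : Fin n) : Prop :=
  (v : ℕ) = ((u : ℕ) + 1) % n

/-- An orientation of `C_n` is unidirectional if all edges are directed the same way around. -/
def Unidirectional (n : ℕ) (σ : Fin n → Bool) : Prop :=
  (∀ i, σ i = true) ∨ (∀ i, σ i = false)

/-- A sink: a vertex of out-degree 0. -/
def IsSink {V : Type*} (A : V → V → Prop) (u : V) : Prop :=
  ∀ v, ¬ A u v

/-- A source: a vertex of in-degree 0. -/
def IsSource {V : Type*} (A : V → V → Prop) (u : V) : Prop :=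
  ∀ v, ¬ A v u

/-- A digraph is Θ-oriented if it has exactly one sink and exactly one source, and
they are adjacent (so the arc between them goes from the source to the sink). -/
def ThetaOriented {V : Type*} (A : V → V → Prop) : Prop :=
  ∃ s t, IsSink A s ∧ IsSource A t ∧ (∀ u, IsSink A u → u = s) ∧
    (∀ u, IsSource A u → u = t) ∧ A t s

/-- The arc relation of the Θ-oriented cycle on `Fin n`:
arcs `i → i+1` for `0 ≤ i ≤ n-2`, together with the arc `0 → n-1`. -/
def thetaArc (n : ℕ) (u v : Fin n) : Prop :=
  ((v : ℕ) = (u : ℕ) + 1) ∨ ((u : ℕ) = 0 ∧ (v : ℕ) = n - 1)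

/-- The arc relation of a disjoint union of `c` oriented cycles, the `j`-th component having
`len j` vertices and arc relation `A j`. -/
def unionArc (c : ℕ) (len : Fin c → ℕ)
    (A : ∀ j, Fin (len j) → Fin (len j) → Prop)
    (u v : Σ j, Fin (len j)) : Prop :=
  ∃ h : u.1 = v.1, A v.1 (Fin.cast (congrArg len h) u.2) v.2

section Aux

lemma aux_val_add_one {n : ℕ} [NeZero n] (hn : 2 ≤ n) (v : Fin n) :
    ((v + 1 : Fin n) : ℕ) = ((v : ℕ) + 1) % n := by
  rw [Fin.val_add, Fin.val_one']
  conv_rhs => rw [Nat.add_mod, Nat.mod_eq_of_lt v.isLt]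

lemma aux_add_one_ne {n : ℕ} [NeZero n] (hn : 2 ≤ n) (v : Fin n) : v + 1 ≠ v := by
  intro h
  have h1 : ((v + 1 : Fin n) : ℕ) = (v : ℕ) := congrArg Fin.val h
  rw [aux_val_add_one hn] at h1
  have hv := v.isLt
  rcases Nat.lt_or_ge ((v : ℕ) + 1) n with hlt | hge
  · rw [Nat.mod_eq_of_lt hlt] at h1; omega
  · have : (v : ℕ) = n - 1 := by omega
    have : ((v : ℕ) + 1) % n = 0 := by
      have : (v : ℕ) + 1 = n := by omega
      simp [this]
    omega

lemma aux_uniArc_iff {n : ℕ} [NeZero n] (hn : 2 ≤ n) (u v : Fin n) :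
    uniArc n u v ↔ v = u + 1 := by
  rw [uniArc, Fin.ext_iff, aux_val_add_one hn]

lemma aux_inDNbhd_uni {n : ℕ} [NeZero n] (hn : 2 ≤ n) (v y : Fin n) :
    InDNbhd (uniArc n) {0, 1} v y ↔ y = v ∨ y = v + 1 := by
  constructor
  · rintro ⟨k, hk, hwalk, hmin⟩
    simp only [Set.mem_insert_iff, Set.mem_singleton_iff] at hk
    rcases hk with rfl | rfl
    · exact Or.inl hwalk.symm
    · obtain ⟨w, ha, hw⟩ := hwalk
      have hw' : w = y := hw
      subst hw'
      exact Or.inr ((aux_uniArc_iff hn v w).mp ha)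
  · rintro (rfl | rfl)
    · exact ⟨0, by simp, rfl, fun m hm => absurd hm (by omega)⟩
    · refine ⟨1, by simp, ⟨v + 1, (aux_uniArc_iff hn v (v + 1)).mpr rfl, rfl⟩, ?_⟩
      intro m hm
      interval_cases m
      exact fun h => aux_add_one_ne hn v (h.symm : v + 1 = v) |>.elim
      -- WalkLen A 0 v (v+1) is v = v + 1

lemma aux_dweight_uni {n : ℕ} [NeZero n] (hn : 2 ≤ n) (g : Fin n → ℕ) (v : Fin n) :
    dWeight (uniArc n) {0, 1} g v = g v + g (v + 1) := by
  have hne : v ≠ v + 1 := fun h => aux_add_one_ne hn v h.symm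
  unfold dWeight
  have key : ∀ y : Fin n, (if InDNbhd (uniArc n) {0, 1} v y then g y else 0)
      = (if y = v then g y else 0) + (if y = v + 1 then g y else 0) := by
    intro y
    by_cases h1 : y = v
    · subst h1
      rw [if_pos ((aux_inDNbhd_uni hn y y).mpr (Or.inl rfl)), if_pos rfl, if_neg hne]
      omega
    · by_cases h2 : y = v + 1
      · subst h2
        rw [if_pos ((aux_inDNbhd_uni hn v (v + 1)).mpr (Or.inr rfl)), if_neg hne.symm,
          if_pos rfl]
        omega
      · have hnb : ¬ InDNbhd (uniArc n) {0, 1} v y := by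
          rw [aux_inDNbhd_uni hn]; tauto
        rw [if_neg hnb, if_neg h1, if_neg h2]
  rw [Finset.sum_congr rfl (fun y _ => key y), Finset.sum_add_distrib,
    Finset.sum_ite_eq' Finset.univ v g, Finset.sum_ite_eq' Finset.univ (v + 1) g]
  simp

lemma aux_odd_case (n a b : ℕ) (hn : 3 ≤ n) (ho : n % 2 = 1)
    (ha : a < n) (hb : b < n)
    (h : (a + 1) + ((a + 1) % n + 1) = (b + 1) + ((b + 1) % n + 1)) : a = b := by
  have hma : (a + 1) % n = if a + 1 = n then 0 else a + 1 := by
    split_ifs with h'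
    · simp [h']
    · exact Nat.mod_eq_of_lt (by omega)
  have hmb : (b + 1) % n = if b + 1 = n then 0 else b + 1 := by
    split_ifs with h'
    · simp [h']
    · exact Nat.mod_eq_of_lt (by omega)
  rw [hma, hmb] at h
  split_ifs at h <;> omega

lemma aux_even_case (n a b : ℕ) (hn : 3 ≤ n) (he : n % 2 = 0)
    (ha : a < n) (hb : b < n)
    (h : ((if a = 0 then 1 else if a = 1 then 0 else a) + 1)
        + ((if (a + 1) % n = 0 then 1 else if (a + 1) % n = 1 then 0 else (a + 1) % n) + 1)
      = ((if b = 0 then 1 else if b = 1 then 0 else b) + 1)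
        + ((if (b + 1) % n = 0 then 1 else if (b + 1) % n = 1 then 0 else (b + 1) % n) + 1)) :
    a = b := by
  have hma : (a + 1) % n = if a + 1 = n then 0 else a + 1 := by
    split_ifs with h'
    · simp [h']
    · exact Nat.mod_eq_of_lt (by omega)
  have hmb : (b + 1) % n = if b + 1 = n then 0 else b + 1 := by
    split_ifs with h'
    · simp [h']
    · exact Nat.mod_eq_of_lt (by omega)
  rw [hma, hmb] at h
  split_ifs at h <;> omega

end Aux

/-- For every `n ≥ 3`, the unidirectional `C⃗_n` is `{0,1}`-antimagic. -/
theorem uni_antimagic_zero_one (n : ℕ) (hn : 3 ≤ n) :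
    DAntimagic (Fin n) (uniArc n) {0, 1} := by
  haveI : NeZero n := ⟨by omega⟩
  have hn2 : 2 ≤ n := by omega
  by_cases hev : Even n
  · -- even case : swap the labels of vertices 0 and 1
    refine ⟨(Equiv.swap (0 : Fin n) 1).trans (finCongr (Fintype.card_fin n).symm), ?_⟩
    intro u v huv
    simp only at huv
    rw [aux_dweight_uni hn2, aux_dweight_uni hn2] at huv
    simp only [Equiv.trans_apply] at huv
    have hval : ∀ x : Fin n,
        ((finCongr (Fintype.card_fin n).symm (Equiv.swap (0 : Fin n) 1 x) : ℕ))
        = if (x : ℕ) = 0 then 1 else if (x : ℕ) = 1 then 0 else (x : ℕ) := by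
      intro x
      rw [finCongr_apply, Fin.coe_cast, Equiv.swap_apply_def]
      have h0 : ((0 : Fin n) : ℕ) = 0 := rfl
      have h1 : ((1 : Fin n) : ℕ) = 1 := by
        rw [Fin.val_one']; exact Nat.mod_eq_of_lt (by omega)
      by_cases hx0 : x = 0
      · rw [hx0, if_pos rfl, h1, h0]
        simp
      · by_cases hx1 : x = 1
        · rw [if_neg hx0, if_pos hx1, hx1, h1, h0]
          simp
        · rw [if_neg hx0, if_neg hx1, if_neg, if_neg]
          · intro hc; exact hx1 (Fin.ext (by rw [hc, h1]))
          · intro hc; exact hx0 (Fin.ext (by rw [hc, h0]))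
    rw [hval u, hval v, hval (u + 1), hval (v + 1)] at huv
    rw [aux_val_add_one hn2, aux_val_add_one hn2] at huv
    have := aux_even_case n (u : ℕ) (v : ℕ) hn (Nat.even_iff.mp hev) u.isLt v.isLt huv
    exact Fin.ext this
  · -- odd case : identity labeling
    refine ⟨(Equiv.refl (Fin n)).trans (finCongr (Fintype.card_fin n).symm), ?_⟩
    intro u v huv
    simp only at huv
    rw [aux_dweight_uni hn2, aux_dweight_uni hn2] at huv
    simp only [Equiv.trans_apply] at huv
    have hval : ∀ x : Fin n,
        ((finCongr (Fintype.card_fin n).symm (Equiv.refl (Fin n) x) : ℕ)) = (x : ℕ) := by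
      intro x
      rw [finCongr_apply, Fin.coe_cast, Equiv.refl_apply]
    rw [hval u, hval v, hval (u + 1), hval (v + 1)] at huv
    rw [aux_val_add_one hn2, aux_val_add_one hn2] at huv
    have ho : n % 2 = 1 := Nat.odd_iff.mp (Nat.not_even_iff_odd.mp hev)
    have := aux_odd_case n (u : ℕ) (v : ℕ) hn ho u.isLt v.isLt huv
    exact Fin.ext this
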